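/- Let γ=(x,z): (I,t₀) → (ℝ²,0) and γ̃=(x̃,z̃): (Ĩ,t̃₀) → (ℝ²,0) be smooth curves, and let 𝐳(t,θ)=(x(t)cosθ, x(t)sinθ, z(t)) and 𝐳̃ be their surfaces of revolution around the z-axis, map-germs (I×[0,2π),(t₀,θ₀)) → (ℝ³,0) and (Ĩ×[0,2π),(t̃₀,θ₀)) → (ℝ³,0). (1) If there exist a diffeomorphism germ φ: (I,t₀) → (Ĩ,t̃₀) and a diffeomorphism germ ψ: (ℝ²,0) → (ℝ²,0) of the form ψ(X,Z) = (X, ϕ(X²,Z)) for a smooth function ϕ, such that ψ∘γ = γ̃∘φ, then Φ(t,θ) = (φ(t),θ) and Ψ(X,Y,Z) = (X, Y, ϕ(X²+Y²,Z)) are diffeomorphism germs with Ψ∘𝐳 = 𝐳̃∘Φ near (t₀,θ₀). (2) Conversely, if there exist a diffeomorphism germ Φ of the form Φ(t,θ) = (φ(t),θ) and a diffeomorphism germ Ψ: (ℝ³,0) → (ℝ³,0) of the form Ψ(X,Y,Z) = (X, Y, ϕ(X²+Y²,Z)) with Ψ∘𝐳 = 𝐳̃∘Φ, then ψ(X,Z)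 = (X, ϕ(X²,Z)) is a diffeomorphism germ of (ℝ²,0) with ψ∘γ = γ̃∘φ near t₀. -/

import Mathlib

open Real

/-- `f` is a germ of diffeomorphism at `p`, sending `p` to `q`: `f` is smooth near `p`
and has a smooth local inverse near `q`. -/
def DiffeoGermAt {E F : Type*} [NormedAddCommGroup E] [NormedSpace ℝ E]
    [NormedAddCommGroup F] [NormedSpace ℝ F] (f : E → F) (p : E) (q : F) : Prop :=
  f p = q ∧ ∃ (U : Set E) (V : Set F) (g : F → E),
    IsOpen U ∧ p ∈ U ∧ IsOpen V ∧ q ∈ V ∧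
    ContDiffOn ℝ (⊤ : ℕ∞) f U ∧ ContDiffOn ℝ (⊤ : ℕ∞) g V ∧
    Set.MapsTo f U V ∧ Set.MapsTo g V U ∧
    (∀ p' ∈ U, g (f p') = p') ∧ (∀ q' ∈ V, f (g q') = q')

lemma one_le_inftyCoe : (1 : WithTop ℕ∞) ≤ ((⊤ : ℕ∞) : WithTop ℕ∞) := by
  exact_mod_cast le_top

lemma inftyCoe_ne_zero : ((⊤ : ℕ∞) : WithTop ℕ∞) ≠ 0 := by
  simp

/-- From a globally smooth map with invertible derivative at `p`, get a diffeo germ. -/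
lemma diffeoGermAt_of_contDiff {E : Type*} [NormedAddCommGroup E] [NormedSpace ℝ E]
    [CompleteSpace E] {f : E → E} {f' : E ≃L[ℝ] E} {p q : E}
    (hf : ContDiff ℝ (⊤ : ℕ∞) f) (hd : HasFDerivAt f (f' : E →L[ℝ] E) p) (hq : f p = q) :
    DiffeoGermAt f p q := by
  subst hq
  refine ⟨rfl, ?_⟩
  have hstrict : HasStrictFDerivAt f (f' : E →L[ℝ] E) p :=
    hf.contDiffAt.hasStrictFDerivAt' hd inftyCoe_ne_zero
  set PH := hstrict.toOpenPartialHomeomorph f with hPH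
  have hPHcoe : ⇑PH = f := rfl
  have hcont : Continuous (fderiv ℝ f) := hf.continuous_fderiv inftyCoe_ne_zero
  set W : Set E := (fderiv ℝ f) ⁻¹' (Set.range ((↑) : (E ≃L[ℝ] E) → E →L[ℝ] E)) with hW
  have hWopen : IsOpen W := ContinuousLinearEquiv.isOpen.preimage hcont
  have hpW : p ∈ W := ⟨f', hd.fderiv.symm⟩
  set U : Set E := PH.source ∩ W with hU
  have hUopen : IsOpen U := PH.open_source.inter hWopen
  have hpU : p ∈ U := ⟨hstrict.mem_toOpenPartialHomeomorph_source, hpW⟩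
  set V : Set E := f '' U with hV
  have hVopen : IsOpen V := by
    have := PH.isOpen_image_of_subset_source hUopen Set.inter_subset_left
    rwa [hPHcoe] at this
  refine ⟨U, V, ⇑PH.symm, hUopen, hpU, hVopen, ⟨p, hpU, rfl⟩, hf.contDiffOn, ?_, ?_, ?_, ?_, ?_⟩
  · intro y hy
    obtain ⟨a, haU, rfl⟩ := hy
    obtain ⟨e, he⟩ := haU.2
    have hda : HasFDerivAt f (e : E →L[ℝ] E) a := by
      rw [he]; exact (hf.differentiable inftyCoe_ne_zero a).hasFDerivAt
    have hmem : f a ∈ PH.target := PH.map_source haU.1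
    have hsa : PH.symm (f a) = a := PH.left_inv haU.1
    have : ContDiffAt ℝ (⊤ : ℕ∞) (⇑PH.symm) (f a) := by
      refine PH.contDiffAt_symm (f₀' := e) hmem ?_ ?_
      · rw [hsa, hPHcoe]; exact hda
      · rw [hsa, hPHcoe]; exact hf.contDiffAt
    exact this.contDiffWithinAt
  · exact fun a haU => ⟨a, haU, rfl⟩
  · rintro y ⟨a, haU, rfl⟩
    have hsa : PH.symm (f a) = a := PH.left_inv haU.1
    rw [hsa]; exact haU
  · exact fun a haU => PH.left_inv haU.1
  · rintro y ⟨a, haU, rfl⟩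
    have hsa : PH.symm (f a) = a := PH.left_inv haU.1
    rw [hsa]

/-- The derivative of a diffeo germ is injective. -/
lemma DiffeoGermAt.fderiv_injective {E F : Type*} [NormedAddCommGroup E] [NormedSpace ℝ E]
    [NormedAddCommGroup F] [NormedSpace ℝ F] {f : E → F} {p : E} {q : F}
    (h : DiffeoGermAt f p q) : Function.Injective (fderiv ℝ f p) := by
  obtain ⟨hpq, U, V, g, hUo, hpU, hVo, hqV, hfU, hgV, hmf, hmg, hgf, hfg⟩ := h
  have hfd : DifferentiableAt ℝ f p :=
    (hfU.contDiffAt (hUo.mem_nhds hpU)).differentiableAt inftyCoe_ne_zero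
  have hgd : DifferentiableAt ℝ g q :=
    (hgV.contDiffAt (hVo.mem_nhds hqV)).differentiableAt inftyCoe_ne_zero
  have hgd' : DifferentiableAt ℝ g (f p) := by rwa [hpq]
  have hcomp : fderiv ℝ (g ∘ f) p = (fderiv ℝ g (f p)).comp (fderiv ℝ f p) :=
    fderiv_comp p hgd' hfd
  have heq : g ∘ f =ᶠ[nhds p] id :=
    Filter.eventuallyEq_of_mem (hUo.mem_nhds hpU) fun p' hp' => hgf p' hp'
  have hid : fderiv ℝ (g ∘ f) p = ContinuousLinearMap.id ℝ E := by
    rw [heq.fderiv_eq, fderiv_id]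
  intro v w hvw
  have hv : (fderiv ℝ g (f p)) ((fderiv ℝ f p) v) = v := by
    rw [← ContinuousLinearMap.comp_apply, ← hcomp, hid]; rfl
  have hw : (fderiv ℝ g (f p)) ((fderiv ℝ f p) w) = w := by
    rw [← ContinuousLinearMap.comp_apply, ← hcomp, hid]; rfl
  rw [← hv, ← hw, hvw]

noncomputable def M2 : (ℝ × ℝ) →L[ℝ] (ℝ × ℝ) :=
  (0 : (ℝ × ℝ) →L[ℝ] ℝ).prod (ContinuousLinearMap.snd ℝ ℝ ℝ)

noncomputable def M3 : (ℝ × ℝ × ℝ) →L[ℝ] (ℝ × ℝ) :=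
  (0 : (ℝ × ℝ × ℝ) →L[ℝ] ℝ).prod
    ((ContinuousLinearMap.snd ℝ ℝ ℝ).comp (ContinuousLinearMap.snd ℝ ℝ (ℝ × ℝ)))

lemma M2_apply (v : ℝ × ℝ) : M2 v = ((0 : ℝ), v.2) := by simp [M2]

lemma M3_apply (v : ℝ × ℝ × ℝ) : M3 v = ((0 : ℝ), v.2.2) := by simp [M3]

lemma key_smul (ϕ : ℝ × ℝ → ℝ) (w : ℝ) :
    fderiv ℝ ϕ ((0:ℝ),(0:ℝ)) ((0:ℝ), w)
      = w * fderiv ℝ ϕ ((0:ℝ),(0:ℝ)) ((0:ℝ),(1:ℝ)) := by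
  rw [show ((0:ℝ), w) = w • ((0:ℝ),(1:ℝ)) by simp, map_smul, smul_eq_mul]

lemma psi_hasFDerivAt (ϕ : ℝ × ℝ → ℝ) (hϕ : ContDiff ℝ (⊤ : ℕ∞) ϕ) :
    HasFDerivAt (fun p : ℝ × ℝ => (p.1, ϕ (p.1 ^ 2, p.2)))
      ((ContinuousLinearMap.fst ℝ ℝ ℝ).prod ((fderiv ℝ ϕ ((0:ℝ),(0:ℝ))).comp M2))
      ((0:ℝ),(0:ℝ)) := by
  have h1 : HasFDerivAt (fun p : ℝ × ℝ => p.1 ^ 2) (0 : (ℝ × ℝ) →L[ℝ] ℝ) ((0:ℝ),(0:ℝ)) := by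
    have h := (hasFDerivAt_fst (𝕜 := ℝ) (p := ((0:ℝ),(0:ℝ)))).mul
      (hasFDerivAt_fst (𝕜 := ℝ) (p := ((0:ℝ),(0:ℝ))))
    simpa [pow_two, Pi.mul_def] using h
  have h2 : HasFDerivAt (fun p : ℝ × ℝ => (p.1 ^ 2, p.2)) M2 ((0:ℝ),(0:ℝ)) :=
    h1.prodMk hasFDerivAt_snd
  have hA : HasFDerivAt ϕ (fderiv ℝ ϕ ((0:ℝ),(0:ℝ))) (((0:ℝ) ^ 2), (0:ℝ)) := by
    rw [show (((0:ℝ) ^ 2), (0:ℝ)) = ((0:ℝ),(0:ℝ)) by norm_num]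
    exact ((hϕ.differentiable inftyCoe_ne_zero) _).hasFDerivAt
  exact hasFDerivAt_fst.prodMk (hA.comp ((0:ℝ),(0:ℝ)) h2)

lemma Psi_hasFDerivAt (ϕ : ℝ × ℝ → ℝ) (hϕ : ContDiff ℝ (⊤ : ℕ∞) ϕ) :
    HasFDerivAt (fun q : ℝ × ℝ × ℝ => (q.1, q.2.1, ϕ (q.1 ^ 2 + q.2.1 ^ 2, q.2.2)))
      ((ContinuousLinearMap.fst ℝ ℝ (ℝ × ℝ)).prod
        (((ContinuousLinearMap.fst ℝ ℝ ℝ).comp (ContinuousLinearMap.snd ℝ ℝ (ℝ × ℝ))).prod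
          ((fderiv ℝ ϕ ((0:ℝ),(0:ℝ))).comp M3)))
      ((0:ℝ),(0:ℝ),(0:ℝ)) := by
  have h1 : HasFDerivAt (fun q : ℝ × ℝ × ℝ => q.1 ^ 2 + q.2.1 ^ 2)
      (0 : (ℝ × ℝ × ℝ) →L[ℝ] ℝ) ((0:ℝ),(0:ℝ),(0:ℝ)) := by
    have ha := (hasFDerivAt_fst (𝕜 := ℝ) (p := ((0:ℝ),(0:ℝ),(0:ℝ)))).mul
      (hasFDerivAt_fst (𝕜 := ℝ) (p := ((0:ℝ),(0:ℝ),(0:ℝ))))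
    have hb := ((hasFDerivAt_snd (𝕜 := ℝ) (p := ((0:ℝ),(0:ℝ),(0:ℝ)))).fst).mul
      ((hasFDerivAt_snd (𝕜 := ℝ) (p := ((0:ℝ),(0:ℝ),(0:ℝ)))).fst)
    simpa [pow_two, Pi.mul_def, Pi.add_def] using ha.add hb
  have h2 : HasFDerivAt (fun q : ℝ × ℝ × ℝ => (q.1 ^ 2 + q.2.1 ^ 2, q.2.2)) M3
      ((0:ℝ),(0:ℝ),(0:ℝ)) := h1.prodMk hasFDerivAt_snd.snd
  have hA : HasFDerivAt ϕ (fderiv ℝ ϕ ((0:ℝ),(0:ℝ)))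
      (((0:ℝ) ^ 2 + (0:ℝ) ^ 2), (0:ℝ)) := by
    rw [show (((0:ℝ) ^ 2 + (0:ℝ) ^ 2), (0:ℝ)) = ((0:ℝ),(0:ℝ)) by norm_num]
    exact ((hϕ.differentiable inftyCoe_ne_zero) _).hasFDerivAt
  exact hasFDerivAt_fst.prodMk (hasFDerivAt_snd.fst.prodMk (hA.comp ((0:ℝ),(0:ℝ),(0:ℝ)) h2))

lemma psi_contDiff (ϕ : ℝ × ℝ → ℝ) (hϕ : ContDiff ℝ (⊤ : ℕ∞) ϕ) :
    ContDiff ℝ (⊤ : ℕ∞) (fun p : ℝ × ℝ => (p.1, ϕ (p.1 ^ 2, p.2))) :=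
  contDiff_fst.prodMk (hϕ.comp ((contDiff_fst.pow 2).prodMk contDiff_snd))

lemma Psi_contDiff (ϕ : ℝ × ℝ → ℝ) (hϕ : ContDiff ℝ (⊤ : ℕ∞) ϕ) :
    ContDiff ℝ (⊤ : ℕ∞)
      (fun q : ℝ × ℝ × ℝ => (q.1, q.2.1, ϕ (q.1 ^ 2 + q.2.1 ^ 2, q.2.2))) :=
  contDiff_fst.prodMk ((contDiff_fst.comp contDiff_snd).prodMk
    (hϕ.comp (((contDiff_fst.pow 2).add ((contDiff_fst.comp contDiff_snd).pow 2)).prodMk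
      (contDiff_snd.comp contDiff_snd))))

lemma c_ne_zero_of_psi (ϕ : ℝ × ℝ → ℝ) (hϕ : ContDiff ℝ (⊤ : ℕ∞) ϕ)
    (hψ : DiffeoGermAt (fun p : ℝ × ℝ => (p.1, ϕ (p.1 ^ 2, p.2)))
      ((0 : ℝ), (0 : ℝ)) ((0 : ℝ), (0 : ℝ))) :
    fderiv ℝ ϕ ((0:ℝ),(0:ℝ)) ((0:ℝ),(1:ℝ)) ≠ 0 := by
  intro h0
  have hψd := psi_hasFDerivAt ϕ hϕ
  have hinj := hψ.fderiv_injective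
  rw [hψd.fderiv] at hinj
  have h01 : ((0:ℝ),(1:ℝ)) = ((0:ℝ),(0:ℝ)) := by
    apply hinj
    simp [M2_apply]
    rw [h0, Prod.mk_zero_zero, map_zero]
  exact one_ne_zero (congrArg Prod.snd h01)

lemma c_ne_zero_of_Psi (ϕ : ℝ × ℝ → ℝ) (hϕ : ContDiff ℝ (⊤ : ℕ∞) ϕ)
    (hΨ : DiffeoGermAt (fun q : ℝ × ℝ × ℝ => (q.1, q.2.1, ϕ (q.1 ^ 2 + q.2.1 ^ 2, q.2.2)))
      ((0 : ℝ), (0 : ℝ), (0 : ℝ)) ((0 : ℝ), (0 : ℝ), (0 : ℝ))) :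
    fderiv ℝ ϕ ((0:ℝ),(0:ℝ)) ((0:ℝ),(1:ℝ)) ≠ 0 := by
  intro h0
  have hΨd := Psi_hasFDerivAt ϕ hϕ
  have hinj := hΨ.fderiv_injective
  rw [hΨd.fderiv] at hinj
  have h01 : ((0:ℝ),(0:ℝ),(1:ℝ)) = ((0:ℝ),(0:ℝ),(0:ℝ)) := by
    apply hinj
    simp [M3_apply]
    rw [h0, Prod.mk_zero_zero, map_zero]
  exact one_ne_zero (congrArg (fun v : ℝ × ℝ × ℝ => v.2.2) h01)

lemma psi_diffeo (ϕ : ℝ × ℝ → ℝ) (hϕ : ContDiff ℝ (⊤ : ℕ∞) ϕ)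
    (h0 : ϕ ((0:ℝ),(0:ℝ)) = 0)
    (hc : fderiv ℝ ϕ ((0:ℝ),(0:ℝ)) ((0:ℝ),(1:ℝ)) ≠ 0) :
    DiffeoGermAt (fun p : ℝ × ℝ => (p.1, ϕ (p.1 ^ 2, p.2)))
      ((0 : ℝ), (0 : ℝ)) ((0 : ℝ), (0 : ℝ)) := by
  set E2 : (ℝ × ℝ) ≃L[ℝ] (ℝ × ℝ) :=
    (ContinuousLinearEquiv.refl ℝ ℝ).prodCongr
      (ContinuousLinearEquiv.unitsEquivAut ℝ (Units.mk0 _ hc)) with hE2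
  have hEq : (E2 : (ℝ × ℝ) →L[ℝ] (ℝ × ℝ))
      = (ContinuousLinearMap.fst ℝ ℝ ℝ).prod ((fderiv ℝ ϕ ((0:ℝ),(0:ℝ))).comp M2) := by
    apply ContinuousLinearMap.ext; intro v
    apply Prod.ext
    · simp [hE2]
    · simp only [hE2, ContinuousLinearEquiv.coe_coe, ContinuousLinearEquiv.prodCongr_apply,
        ContinuousLinearMap.prod_apply, ContinuousLinearMap.comp_apply, M2_apply,
        ContinuousLinearEquiv.refl_apply]
      show v.2 * _ = _
      exact (key_smul ϕ v.2).symm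
  refine diffeoGermAt_of_contDiff (psi_contDiff ϕ hϕ) (f' := E2) ?_ ?_
  · rw [hEq]; exact psi_hasFDerivAt ϕ hϕ
  · refine Prod.ext rfl ?_
    show ϕ ((0:ℝ) ^ 2, (0:ℝ)) = 0
    rw [show ((0:ℝ) ^ 2, (0:ℝ)) = ((0:ℝ),(0:ℝ)) by norm_num]
    exact h0

lemma Psi_diffeo (ϕ : ℝ × ℝ → ℝ) (hϕ : ContDiff ℝ (⊤ : ℕ∞) ϕ)
    (h0 : ϕ ((0:ℝ),(0:ℝ)) = 0)
    (hc : fderiv ℝ ϕ ((0:ℝ),(0:ℝ)) ((0:ℝ),(1:ℝ)) ≠ 0) :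
    DiffeoGermAt (fun q : ℝ × ℝ × ℝ => (q.1, q.2.1, ϕ (q.1 ^ 2 + q.2.1 ^ 2, q.2.2)))
      ((0 : ℝ), (0 : ℝ), (0 : ℝ)) ((0 : ℝ), (0 : ℝ), (0 : ℝ)) := by
  set E3 : (ℝ × ℝ × ℝ) ≃L[ℝ] (ℝ × ℝ × ℝ) :=
    (ContinuousLinearEquiv.refl ℝ ℝ).prodCongr
      ((ContinuousLinearEquiv.refl ℝ ℝ).prodCongr
        (ContinuousLinearEquiv.unitsEquivAut ℝ (Units.mk0 _ hc))) with hE3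
  have hEq : (E3 : (ℝ × ℝ × ℝ) →L[ℝ] (ℝ × ℝ × ℝ))
      = (ContinuousLinearMap.fst ℝ ℝ (ℝ × ℝ)).prod
        (((ContinuousLinearMap.fst ℝ ℝ ℝ).comp (ContinuousLinearMap.snd ℝ ℝ (ℝ × ℝ))).prod
          ((fderiv ℝ ϕ ((0:ℝ),(0:ℝ))).comp M3)) := by
    apply ContinuousLinearMap.ext; intro v
    apply Prod.ext
    · simp [hE3]
    · apply Prod.ext
      · simp [hE3]
      · simp only [hE3, ContinuousLinearEquiv.coe_coe, ContinuousLinearEquiv.prodCongr_apply,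
          ContinuousLinearMap.prod_apply, ContinuousLinearMap.comp_apply, M3_apply,
          ContinuousLinearEquiv.refl_apply]
        show v.2.2 * _ = _
        exact (key_smul ϕ v.2.2).symm
  refine diffeoGermAt_of_contDiff (Psi_contDiff ϕ hϕ) (f' := E3) ?_ ?_
  · rw [hEq]; exact Psi_hasFDerivAt ϕ hϕ
  · refine Prod.ext rfl (Prod.ext rfl ?_)
    show ϕ ((0:ℝ) ^ 2 + (0:ℝ) ^ 2, (0:ℝ)) = 0
    rw [show ((0:ℝ) ^ 2 + (0:ℝ) ^ 2, (0:ℝ)) = ((0:ℝ),(0:ℝ)) by norm_num]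
    exact h0

lemma Phi_diffeo (φ : ℝ → ℝ) (t₀ t₀' θ₀ : ℝ) (hφ : DiffeoGermAt φ t₀ t₀') :
    DiffeoGermAt (fun p : ℝ × ℝ => (φ p.1, p.2)) (t₀, θ₀) (t₀', θ₀) := by
  obtain ⟨h0, U, V, g, hUo, hpU, hVo, hqV, hfU, hgV, hmf, hmg, hgf, hfg⟩ := hφ
  refine ⟨Prod.ext h0 rfl, U ×ˢ Set.univ, V ×ˢ Set.univ, fun q => (g q.1, q.2),
    hUo.prod isOpen_univ, ⟨hpU, trivial⟩, hVo.prod isOpen_univ, ⟨hqV, trivial⟩, ?_, ?_,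
    fun p hp => ⟨hmf hp.1, trivial⟩, fun q hq => ⟨hmg hq.1, trivial⟩,
    fun p hp => Prod.ext (hgf p.1 hp.1) rfl, fun q hq => Prod.ext (hfg q.1 hq.1) rfl⟩
  · exact (hfU.comp contDiff_fst.contDiffOn fun p hp => hp.1).prodMk contDiff_snd.contDiffOn
  · exact (hgV.comp contDiff_fst.contDiffOn fun q hq => hq.1).prodMk contDiff_snd.contDiffOn
/-- Let `γ = (x, z) : (I, t₀) → (ℝ², 0)` and
`γ' = (x', z') : (I', t₀') → (ℝ², 0)` be smooth curves, and `𝐳`, `𝐳'` their surfaces of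
revolution around the z-axis, germs at `(t₀, θ₀)`, `(t₀', θ₀)` mapping to `(ℝ³, 0)`.
(1) If a diffeomorphism germ `φ : (I, t₀) → (I', t₀')` and a diffeomorphism germ
`ψ(X,Z) = (X, ϕ(X², Z))` of `(ℝ², 0)` (for smooth `ϕ`) satisfy `ψ ∘ γ = γ' ∘ φ`, then
`Φ(t,θ) = (φ t, θ)` and `Ψ(X,Y,Z) = (X, Y, ϕ(X² + Y², Z))` are diffeomorphism germs
with `Ψ ∘ 𝐳 = 𝐳' ∘ Φ` near `(t₀, θ₀)`.
(2) Conversely, if such `Φ` and `Ψ` are diffeomorphism germs with `Ψ ∘ 𝐳 = 𝐳' ∘ Φ`,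
then `ψ(X,Z) = (X, ϕ(X², Z))` is a diffeomorphism germ of `(ℝ², 0)` with
`ψ ∘ γ = γ' ∘ φ` near `t₀`. -/
theorem equivalence_of_surfaces_of_revolution_profile_curve_through_axis
    (x z x' z' : ℝ → ℝ) (t₀ t₀' θ₀ : ℝ)
    (hx : ContDiff ℝ (⊤ : ℕ∞) x) (hz : ContDiff ℝ (⊤ : ℕ∞) z)
    (hx' : ContDiff ℝ (⊤ : ℕ∞) x') (hz' : ContDiff ℝ (⊤ : ℕ∞) z')
    (hγ0 : x t₀ = 0 ∧ z t₀ = 0) (hγ0' : x' t₀' = 0 ∧ z' t₀' = 0) :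
    -- (1)
    (∀ (φ : ℝ → ℝ) (ϕ : ℝ × ℝ → ℝ), ContDiff ℝ (⊤ : ℕ∞) ϕ →
      DiffeoGermAt φ t₀ t₀' →
      DiffeoGermAt (fun p : ℝ × ℝ => (p.1, ϕ (p.1 ^ 2, p.2)))
        ((0 : ℝ), (0 : ℝ)) ((0 : ℝ), (0 : ℝ)) →
      (∀ᶠ t in nhds t₀, (x t, ϕ ((x t) ^ 2, z t)) = (x' (φ t), z' (φ t))) →
      DiffeoGermAt (fun p : ℝ × ℝ => (φ p.1, p.2)) (t₀, θ₀) (t₀', θ₀) ∧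
      DiffeoGermAt (fun q : ℝ × ℝ × ℝ => (q.1, q.2.1, ϕ (q.1 ^ 2 + q.2.1 ^ 2, q.2.2)))
        ((0 : ℝ), (0 : ℝ), (0 : ℝ)) ((0 : ℝ), (0 : ℝ), (0 : ℝ)) ∧
      ∀ᶠ p : ℝ × ℝ in nhds (t₀, θ₀),
        (x p.1 * cos p.2, x p.1 * sin p.2, ϕ ((x p.1 * cos p.2) ^ 2 + (x p.1 * sin p.2) ^ 2, z p.1)) =
          (x' (φ p.1) * cos p.2, x' (φ p.1) * sin p.2, z' (φ p.1))) ∧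
    -- (2)
    (∀ (φ : ℝ → ℝ) (ϕ : ℝ × ℝ → ℝ), ContDiff ℝ (⊤ : ℕ∞) ϕ →
      DiffeoGermAt (fun p : ℝ × ℝ => (φ p.1, p.2)) (t₀, θ₀) (t₀', θ₀) →
      DiffeoGermAt (fun q : ℝ × ℝ × ℝ => (q.1, q.2.1, ϕ (q.1 ^ 2 + q.2.1 ^ 2, q.2.2)))
        ((0 : ℝ), (0 : ℝ), (0 : ℝ)) ((0 : ℝ), (0 : ℝ), (0 : ℝ)) →
      (∀ᶠ p : ℝ × ℝ in nhds (t₀, θ₀),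
        (x p.1 * cos p.2, x p.1 * sin p.2, ϕ ((x p.1 * cos p.2) ^ 2 + (x p.1 * sin p.2) ^ 2, z p.1)) =
          (x' (φ p.1) * cos p.2, x' (φ p.1) * sin p.2, z' (φ p.1))) →
      DiffeoGermAt (fun p : ℝ × ℝ => (p.1, ϕ (p.1 ^ 2, p.2)))
        ((0 : ℝ), (0 : ℝ)) ((0 : ℝ), (0 : ℝ)) ∧
      ∀ᶠ t in nhds t₀, (x t, ϕ ((x t) ^ 2, z t)) = (x' (φ t), z' (φ t))) := by
  constructor
  · -- (1)
    intro φ ϕ hϕ hφ hψ hcurve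
    have hϕ00 : ϕ ((0:ℝ),(0:ℝ)) = 0 := by
      have h := congrArg Prod.snd hψ.1
      norm_num at h
      exact h
    have hc := c_ne_zero_of_psi ϕ hϕ hψ
    refine ⟨Phi_diffeo φ t₀ t₀' θ₀ hφ, Psi_diffeo ϕ hϕ hϕ00 hc, ?_⟩
    have htend : Filter.Tendsto (Prod.fst : ℝ × ℝ → ℝ) (nhds (t₀, θ₀)) (nhds t₀) :=
      continuousAt_fst
    filter_upwards [htend.eventually hcurve] with p hp
    have h1 : x p.1 = x' (φ p.1) := congrArg Prod.fst hp
    have h2 : ϕ (x p.1 ^ 2, z p.1) = z' (φ p.1) := congrArg Prod.snd hp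
    have hsum : (x p.1 * cos p.2) ^ 2 + (x p.1 * sin p.2) ^ 2 = x p.1 ^ 2 := by
      linear_combination (x p.1 ^ 2) * sin_sq_add_cos_sq p.2
    refine Prod.ext ?_ (Prod.ext ?_ ?_)
    · show x p.1 * cos p.2 = x' (φ p.1) * cos p.2
      rw [h1]
    · show x p.1 * sin p.2 = x' (φ p.1) * sin p.2
      rw [h1]
    · show ϕ ((x p.1 * cos p.2) ^ 2 + (x p.1 * sin p.2) ^ 2, z p.1) = z' (φ p.1)
      rw [hsum]; exact h2
  · -- (2)
    intro φ ϕ hϕ hΦ hΨ hE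
    have hϕ00 : ϕ ((0:ℝ),(0:ℝ)) = 0 := by
      have h := congrArg (fun v : ℝ × ℝ × ℝ => v.2.2) hΨ.1
      norm_num at h
      exact h
    have hc := c_ne_zero_of_Psi ϕ hϕ hΨ
    refine ⟨psi_diffeo ϕ hϕ hϕ00 hc, ?_⟩
    have htend : Filter.Tendsto (fun t : ℝ => (t, θ₀)) (nhds t₀) (nhds (t₀, θ₀)) :=
      (continuous_id.prodMk continuous_const).tendsto t₀
    filter_upwards [htend.eventually hE] with t ht
    have h1 : x t * cos θ₀ = x' (φ t) * cos θ₀ := congrArg Prod.fst ht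
    have h2 : x t * sin θ₀ = x' (φ t) * sin θ₀ := congrArg (fun v : ℝ × ℝ × ℝ => v.2.1) ht
    have h3 : ϕ ((x t * cos θ₀) ^ 2 + (x t * sin θ₀) ^ 2, z t) = z' (φ t) :=
      congrArg (fun v : ℝ × ℝ × ℝ => v.2.2) ht
    have hsum : (x t * cos θ₀) ^ 2 + (x t * sin θ₀) ^ 2 = x t ^ 2 := by
      linear_combination (x t ^ 2) * sin_sq_add_cos_sq θ₀
    have hxx : x t = x' (φ t) := by
      by_cases hcos : cos θ₀ = 0
      · have hsin : sin θ₀ ≠ 0 := by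
          intro hs
          have h4 := sin_sq_add_cos_sq θ₀
          rw [hs, hcos] at h4; norm_num at h4
        exact mul_right_cancel₀ hsin h2
      · exact mul_right_cancel₀ hcos h1
    refine Prod.ext hxx ?_
    show ϕ (x t ^ 2, z t) = z' (φ t)
    rw [← hsum]; exact h3
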